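/- Under the Chinese restaurant process with parameter θ > 0 on partitions of {1,…,p} (p ≥ 2), the co-clustering probability P(z_i = z_j) equals 1/(θ+1) for all i ≠ j. Consequently, CRP(θ) with θ = a/(2−a) is a risk equilibrium prior with respect to generalized Binder's loss with weight a ∈ (0,2). -/

import Mathlib

open Finset

/-- Sequential probability of a cluster-label sequence (given in reverse order, most
recent label first) under the Chinese restaurant process with parameter `θ`: an
existing label `j` is chosen with probability `count j/(θ+i)` and a new label (the
current number of distinct labels, in restricted-growth coding) with probability
`θ/(θ+i)`. -/
noncomputable def crpAux (θ : ℝ) : List ℕ → ℝ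
  | [] => 1
  | j :: prev =>
      crpAux θ prev *
        (if 0 < prev.count j then (prev.count j : ℝ) / (θ + prev.length)
         else if j = prev.dedup.length then θ / (θ + prev.length)
         else 0)

/-- Probability of the label vector `z` under CRP(θ). -/
noncomputable def crpProb (θ : ℝ) (p : ℕ) (z : Fin p → Fin p) : ℝ :=
  crpAux θ ((List.ofFn fun i => (z i : ℕ)).reverse)

namespace CRPProof

/-- The one-step transition factor. -/
noncomputable def factor (θ : ℝ) (l : List ℕ) (a : ℕ) : ℝ :=
  if 0 < l.count a then (l.count a : ℝ) / (θ + l.length)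
  else if a = l.dedup.length then θ / (θ + l.length) else 0

lemma crpAux_cons (θ : ℝ) (j : ℕ) (prev : List ℕ) :
    crpAux θ (j :: prev) = crpAux θ prev * factor θ prev j := rfl

lemma crpAux_mem_lt (θ : ℝ) : ∀ (l : List ℕ), crpAux θ l ≠ 0 →
    ∀ x ∈ l, x < l.dedup.length := by
  intro l
  induction l with
  | nil => simp
  | cons j prev ih =>
    intro h x hx
    rw [crpAux_cons] at h
    have h1 : crpAux θ prev ≠ 0 := left_ne_zero_of_mul h
    have h2 := right_ne_zero_of_mul h
    by_cases hc : 0 < prev.count j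
    · have hj : j ∈ prev := List.count_pos_iff.mp hc
      rw [List.dedup_cons_of_mem hj]
      rcases List.mem_cons.mp hx with rfl | hx'
      · exact ih h1 x hj
      · exact ih h1 x hx'
    · have hjm : j ∉ prev := fun hm => hc (List.count_pos_iff.mpr hm)
      have hj : j = prev.dedup.length := by
        by_contra hne
        simp only [factor, hc, if_false, hne] at h2
        exact h2 rfl
      rw [List.dedup_cons_of_notMem hjm, List.length_cons]
      rcases List.mem_cons.mp hx with rfl | hx'
      · omega
      · exact Nat.lt_succ_of_lt (ih h1 x hx')

lemma count_new (θ : ℝ) (l : List ℕ) (h : crpAux θ l ≠ 0) :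
    l.count l.dedup.length = 0 :=
  List.count_eq_zero.mpr fun hm => lt_irrefl _ (crpAux_mem_lt θ l h _ hm)

lemma sum_count (p : ℕ) : ∀ (l : List ℕ), (∀ x ∈ l, x < p) →
    ∑ a : Fin p, l.count (a : ℕ) = l.length := by
  intro l
  induction l with
  | nil => simp
  | cons x l ih =>
    intro h
    have hx : x < p := h x List.mem_cons_self
    simp only [List.count_cons, List.length_cons, beq_iff_eq]
    rw [Finset.sum_add_distrib, ih (fun y hy => h y (List.mem_cons_of_mem x hy))]
    congr 1
    have : ∀ a : Fin p, (if x = (a : ℕ) then 1 else 0)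
        = (if a = (⟨x, hx⟩ : Fin p) then 1 else 0) := by
      intro a
      congr 1
      simp [Fin.ext_iff, eq_comm]
    calc ∑ a : Fin p, (if x = (a : ℕ) then 1 else 0)
        = ∑ a : Fin p, (if a = (⟨x, hx⟩ : Fin p) then 1 else 0) :=
          Finset.sum_congr rfl fun a _ => this a
      _ = 1 := by rw [Finset.sum_ite_eq' Finset.univ]; simp

end CRPProof

namespace CRPProof

lemma factor_eq (θ : ℝ) (l : List ℕ) (h : l.count l.dedup.length = 0) (a : ℕ) :
    factor θ l a = (l.count a : ℝ) / (θ + l.length)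
      + (if a = l.dedup.length then θ / (θ + l.length) else 0) := by
  unfold factor
  by_cases hc : 0 < l.count a
  · have hne : a ≠ l.dedup.length := by
      intro he; rw [he, h] at hc; exact lt_irrefl 0 hc
    simp [hc, hne]
  · have h0 : l.count a = 0 := Nat.eq_zero_of_not_pos hc
    simp [hc, h0]

lemma sum_factor (θ : ℝ) (hθ : 0 < θ) (p : ℕ) (l : List ℕ)
    (hlt : ∀ x ∈ l, x < p) (hlen : l.length < p)
    (h0 : l.count l.dedup.length = 0) :
    ∑ a : Fin p, factor θ l (a : ℕ) = 1 := by
  have hD : (0 : ℝ) < θ + l.length := by positivity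
  have hk : l.dedup.length < p :=
    lt_of_le_of_lt (List.Sublist.length_le (List.dedup_sublist l)) hlen
  simp only [factor_eq θ l h0]
  rw [Finset.sum_add_distrib, ← Finset.sum_div]
  have hc : ∑ a : Fin p, ((l.count (a : ℕ) : ℝ)) = (l.length : ℝ) := by
    rw [← Nat.cast_sum, sum_count p l hlt]
  rw [hc]
  have hind : ∑ a : Fin p, (if (a : ℕ) = l.dedup.length then θ / (θ + l.length) else 0)
      = θ / (θ + l.length) := by
    have : ∀ a : Fin p, (if (a : ℕ) = l.dedup.length then θ / (θ + l.length) else 0)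
        = (if a = (⟨l.dedup.length, hk⟩ : Fin p) then θ / (θ + l.length) else 0) := by
      intro a; congr 1; simp [Fin.ext_iff]
    rw [Finset.sum_congr rfl fun a _ => this a, Finset.sum_ite_eq' Finset.univ]
    simp
  rw [hind]
  field_simp
  ring

lemma count_ofFn : ∀ (n : ℕ) (g : Fin n → ℕ) (x : ℕ),
    (List.ofFn g).count x = ∑ m : Fin n, if g m = x then 1 else 0 := by
  intro n
  induction n with
  | zero => simp
  | succ n ih =>
    intro g x
    rw [List.ofFn_succ, List.count_cons, Fin.sum_univ_succ, ih]
    simp only [beq_iff_eq]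
    exact add_comm _ _

/-- crp probability of a length-`n` tuple with labels in `Fin p`. -/
noncomputable def A (θ : ℝ) (p n : ℕ) (f : Fin n → Fin p) : ℝ :=
  crpAux θ ((List.ofFn fun i => (f i : ℕ)).reverse)

lemma listOf_snoc (p n : ℕ) (f : Fin n → Fin p) (a : Fin p) :
    (List.ofFn fun i => ((Fin.snoc f a : Fin (n + 1) → Fin p) i : ℕ)).reverse
      = (a : ℕ) :: (List.ofFn fun i => (f i : ℕ)).reverse := by
  rw [List.ofFn_succ', List.concat_eq_append, List.reverse_append]
  simp only [List.reverse_singleton, List.singleton_append, Fin.snoc_last, Fin.snoc_castSucc]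

lemma A_snoc (θ : ℝ) (p n : ℕ) (f : Fin n → Fin p) (a : Fin p) :
    A θ p (n + 1) (Fin.snoc f a)
      = A θ p n f * factor θ ((List.ofFn fun i => (f i : ℕ)).reverse) (a : ℕ) := by
  unfold A
  rw [listOf_snoc]
  rfl

lemma lf_length (p n : ℕ) (f : Fin n → Fin p) :
    ((List.ofFn fun i => (f i : ℕ)).reverse).length = n := by simp

lemma lf_mem_lt (p n : ℕ) (f : Fin n → Fin p) :
    ∀ x ∈ (List.ofFn fun i => (f i : ℕ)).reverse, x < p := by
  intro x hx
  rw [List.mem_reverse, List.mem_ofFn] at hx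
  obtain ⟨i, rfl⟩ := hx
  exact (f i).is_lt

lemma sum_snoc (p n : ℕ) (g : (Fin (n + 1) → Fin p) → ℝ) :
    ∑ z : Fin (n + 1) → Fin p, g z
      = ∑ a : Fin p, ∑ f : Fin n → Fin p, g (Fin.snoc f a) := by
  rw [← Equiv.sum_comp (Fin.snocEquiv (fun _ => Fin p)) g, Fintype.sum_prod_type]
  rfl

lemma sum_factor_A (θ : ℝ) (hθ : 0 < θ) (p n : ℕ) (hn : n < p) (f : Fin n → Fin p) :
    ∑ a : Fin p, A θ p (n + 1) (Fin.snoc f a) = A θ p n f := by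
  simp_rw [A_snoc]
  rw [← Finset.mul_sum]
  by_cases h0 : A θ p n f = 0
  · rw [h0, zero_mul]
  · rw [sum_factor θ hθ p _ (lf_mem_lt p n f) (by rw [lf_length]; exact hn)
      (count_new θ _ h0), mul_one]

lemma total (θ : ℝ) (hθ : 0 < θ) (p : ℕ) :
    ∀ n, n ≤ p → ∑ f : Fin n → Fin p, A θ p n f = 1 := by
  intro n
  induction n with
  | zero =>
    intro _
    haveI : Unique (Fin 0 → Fin p) :=
      ⟨⟨fun i => i.elim0⟩, fun f => funext fun i => i.elim0⟩
    rw [Fintype.sum_unique]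
    simp [A, crpAux]
  | succ n ih =>
    intro hn
    rw [sum_snoc p n (fun z => A θ p (n + 1) z), Finset.sum_comm]
    calc ∑ f : Fin n → Fin p, ∑ a : Fin p, A θ p (n + 1) (Fin.snoc f a)
        = ∑ f : Fin n → Fin p, A θ p n f :=
          Finset.sum_congr rfl fun f _ => sum_factor_A θ hθ p n (Nat.lt_of_succ_le hn) f
      _ = 1 := ih (Nat.le_of_succ_le hn)

end CRPProof

namespace CRPProof

lemma count_lf_real (p n : ℕ) (f : Fin n → Fin p) (i0 : Fin n) :
    ((((List.ofFn fun i => (f i : ℕ)).reverse).count ((f i0 : ℕ)) : ℝ))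
      = ∑ m : Fin n, if f m = f i0 then 1 else 0 := by
  rw [List.count_reverse, count_ofFn]
  push_cast
  exact Finset.sum_congr rfl fun m _ => by
    by_cases h : f m = f i0
    · simp [h]
    · simp only [if_neg h, if_neg (fun hv => h (Fin.val_injective hv)), Nat.cast_zero]

lemma pair_last (θ : ℝ) (hθ : 0 < θ) (p n : ℕ) (hn : n + 1 ≤ p)
    (htot : ∑ f : Fin n → Fin p, A θ p n f = 1)
    (hpair : ∀ m m' : Fin n, m ≠ m' →
      ∑ f : Fin n → Fin p, (if f m = f m' then A θ p n f else 0) = 1 / (θ + 1))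
    (i' : Fin n) :
    ∑ f : Fin n → Fin p, ∑ a : Fin p,
      (if f i' = a then A θ p (n + 1) (Fin.snoc f a) else 0) = 1 / (θ + 1) := by
  have hD : (0 : ℝ) < θ + n := by positivity
  have hD1 : (0 : ℝ) < θ + 1 := by positivity
  have step1 : ∀ f : Fin n → Fin p,
      (∑ a : Fin p, if f i' = a then A θ p (n + 1) (Fin.snoc f a) else 0)
        = A θ p n f * (((List.ofFn fun i => (f i : ℕ)).reverse).count ((f i' : ℕ)) : ℝ)
            / (θ + n) := by
    intro f
    rw [Finset.sum_ite_eq Finset.univ (f i') (fun a => A θ p (n + 1) (Fin.snoc f a))]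
    rw [if_pos (Finset.mem_univ _)]
    rw [A_snoc]
    have hmem : ((f i' : ℕ)) ∈ (List.ofFn fun i => (f i : ℕ)).reverse := by
      rw [List.mem_reverse, List.mem_ofFn]
      exact ⟨i', rfl⟩
    have hcpos : 0 < ((List.ofFn fun i => (f i : ℕ)).reverse).count ((f i' : ℕ)) :=
      List.count_pos_iff.mpr hmem
    rw [factor, if_pos hcpos, lf_length]
    ring
  rw [Finset.sum_congr rfl fun f _ => step1 f]
  have step2 : ∀ f : Fin n → Fin p,
      A θ p n f * (((List.ofFn fun i => (f i : ℕ)).reverse).count ((f i' : ℕ)) : ℝ) / (θ + n)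
        = (∑ m : Fin n, if f m = f i' then A θ p n f else 0) / (θ + n) := by
    intro f
    rw [count_lf_real, Finset.mul_sum]
    congr 1
    exact Finset.sum_congr rfl fun m _ => by
      by_cases h : f m = f i' <;> simp [h]
  rw [Finset.sum_congr rfl fun f _ => step2 f]
  rw [← Finset.sum_div, Finset.sum_comm]
  have step3 : ∀ m : Fin n,
      (∑ f : Fin n → Fin p, if f m = f i' then A θ p n f else 0)
        = if m = i' then 1 else 1 / (θ + 1) := by
    intro m
    by_cases hm : m = i'
    · subst hm
      rw [if_pos rfl, ← htot]
      exact Finset.sum_congr rfl fun f _ => by simp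
    · rw [if_neg hm]
      exact hpair m i' hm
  rw [Finset.sum_congr rfl fun m _ => step3 m]
  have step4 : (∑ m : Fin n, if m = i' then (1 : ℝ) else 1 / (θ + 1))
      = (n : ℝ) * (1 / (θ + 1)) + (1 - 1 / (θ + 1)) := by
    have : ∀ m : Fin n, (if m = i' then (1 : ℝ) else 1 / (θ + 1))
        = 1 / (θ + 1) + (if m = i' then 1 - 1 / (θ + 1) else 0) := by
      intro m; by_cases h : m = i' <;> simp [h]
    rw [Finset.sum_congr rfl fun m _ => this m, Finset.sum_add_distrib,
      Finset.sum_const, Finset.sum_ite_eq' Finset.univ]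
    simp [mul_comm]
  rw [step4]
  field_simp
  ring

lemma pair (θ : ℝ) (hθ : 0 < θ) (p : ℕ) :
    ∀ n, n ≤ p → ∀ i j : Fin n, i ≠ j →
      ∑ f : Fin n → Fin p, (if f i = f j then A θ p n f else 0) = 1 / (θ + 1) := by
  intro n
  induction n with
  | zero => intro _ i; exact i.elim0
  | succ n ih =>
    intro hn i j hij
    have hn' : n ≤ p := Nat.le_of_succ_le hn
    have hlt : n < p := Nat.lt_of_succ_le hn
    rw [sum_snoc p n (fun z => if z i = z j then A θ p (n + 1) z else 0), Finset.sum_comm]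
    by_cases hi : i = Fin.last n
    · have hj : j ≠ Fin.last n := fun h => hij (hi.trans h.symm)
      obtain ⟨j', rfl⟩ := Fin.exists_castSucc_eq.mpr hj
      subst hi
      have hcond : ∀ (f : Fin n → Fin p) (a : Fin p),
          (if (Fin.snoc f a : Fin (n + 1) → Fin p) (Fin.last n)
              = (Fin.snoc f a : Fin (n + 1) → Fin p) (Fin.castSucc j')
            then A θ p (n + 1) (Fin.snoc f a) else 0)
          = (if f j' = a then A θ p (n + 1) (Fin.snoc f a) else 0) := by
        intro f a
        rw [Fin.snoc_last, Fin.snoc_castSucc]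
        exact if_congr eq_comm rfl rfl
      calc ∑ f : Fin n → Fin p, ∑ a : Fin p,
            (if (Fin.snoc f a : Fin (n + 1) → Fin p) (Fin.last n)
                = (Fin.snoc f a : Fin (n + 1) → Fin p) (Fin.castSucc j')
              then A θ p (n + 1) (Fin.snoc f a) else 0)
          = ∑ f : Fin n → Fin p, ∑ a : Fin p,
              (if f j' = a then A θ p (n + 1) (Fin.snoc f a) else 0) :=
            Finset.sum_congr rfl fun f _ => Finset.sum_congr rfl fun a _ => hcond f a
        _ = 1 / (θ + 1) := pair_last θ hθ p n hn (total θ hθ p n hn')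
              (fun m m' hm => ih hn' m m' hm) j'
    · by_cases hj : j = Fin.last n
      · obtain ⟨i', rfl⟩ := Fin.exists_castSucc_eq.mpr hi
        subst hj
        have hcond : ∀ (f : Fin n → Fin p) (a : Fin p),
            (if (Fin.snoc f a : Fin (n + 1) → Fin p) (Fin.castSucc i')
                = (Fin.snoc f a : Fin (n + 1) → Fin p) (Fin.last n)
              then A θ p (n + 1) (Fin.snoc f a) else 0)
            = (if f i' = a then A θ p (n + 1) (Fin.snoc f a) else 0) := by
          intro f a
          rw [Fin.snoc_last, Fin.snoc_castSucc]
        calc ∑ f : Fin n → Fin p, ∑ a : Fin p,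
              (if (Fin.snoc f a : Fin (n + 1) → Fin p) (Fin.castSucc i')
                  = (Fin.snoc f a : Fin (n + 1) → Fin p) (Fin.last n)
                then A θ p (n + 1) (Fin.snoc f a) else 0)
            = ∑ f : Fin n → Fin p, ∑ a : Fin p,
                (if f i' = a then A θ p (n + 1) (Fin.snoc f a) else 0) :=
              Finset.sum_congr rfl fun f _ => Finset.sum_congr rfl fun a _ => hcond f a
          _ = 1 / (θ + 1) := pair_last θ hθ p n hn (total θ hθ p n hn')
                (fun m m' hm => ih hn' m m' hm) i'
      · obtain ⟨i', rfl⟩ := Fin.exists_castSucc_eq.mpr hi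
        obtain ⟨j', rfl⟩ := Fin.exists_castSucc_eq.mpr hj
        have hij' : i' ≠ j' := fun h => hij (congrArg Fin.castSucc h)
        have hinner : ∀ f : Fin n → Fin p,
            (∑ a : Fin p,
              if (Fin.snoc f a : Fin (n + 1) → Fin p) (Fin.castSucc i')
                  = (Fin.snoc f a : Fin (n + 1) → Fin p) (Fin.castSucc j')
                then A θ p (n + 1) (Fin.snoc f a) else 0)
            = (if f i' = f j' then A θ p n f else 0) := by
          intro f
          simp only [Fin.snoc_castSucc]
          by_cases h : f i' = f j'
          · simp only [if_pos h]
            exact sum_factor_A θ hθ p n hlt f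
          · simp [h]
        rw [Finset.sum_congr rfl fun f _ => hinner f]
        exact ih hn' i' j' hij'

end CRPProof

/-- Under CRP(θ) the co-clustering probability is `1/(θ+1)`; consequently, CRP with
`θ = a/(2−a)` is a risk equilibrium prior with respect to generalized Binder's loss
with weight `a ∈ (0,2)`. -/
theorem crp_coclustering_and_risk_equilibrium
    (p : ℕ) (hp : 2 ≤ p) (θ : ℝ) (hθ : 0 < θ) :
    (∀ i j : Fin p, i ≠ j →
      (∑ z : Fin p → Fin p, (if z i = z j then crpProb θ p z else 0)) = 1 / (θ + 1)) ∧
    (∀ a : ℝ, 0 < a → a < 2 → θ = a / (2 - a) →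
      ∀ zhat zhat' : Fin p → Fin p,
        (∑ z : Fin p → Fin p, crpProb θ p z *
          ∑ i : Fin p, ∑ j : Fin p, (if i < j then
            (a * (if z i = z j then 1 else 0) * (if zhat i ≠ zhat j then 1 else 0)
              + (2 - a) * (if z i ≠ z j then 1 else 0) * (if zhat i = zhat j then 1 else 0))
            else 0))
        = (∑ z : Fin p → Fin p, crpProb θ p z *
          ∑ i : Fin p, ∑ j : Fin p, (if i < j then
            (a * (if z i = z j then 1 else 0) * (if zhat' i ≠ zhat' j then 1 else 0)
              + (2 - a) * (if z i ≠ z j then 1 else 0) * (if zhat' i = zhat' j then 1 else 0))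
            else 0))) := by
  have hprob : ∀ z : Fin p → Fin p, crpProb θ p z = CRPProof.A θ p p z := fun _ => rfl
  have hpair : ∀ i j : Fin p, i ≠ j →
      (∑ z : Fin p → Fin p, (if z i = z j then crpProb θ p z else 0)) = 1 / (θ + 1) := by
    intro i j hij
    simp only [hprob]
    exact CRPProof.pair θ hθ p p le_rfl i j hij
  have htot : ∑ z : Fin p → Fin p, crpProb θ p z = 1 := by
    simp only [hprob]
    exact CRPProof.total θ hθ p p le_rfl
  refine ⟨hpair, ?_⟩
  intro a ha0 ha2 hθa zhat zhat'
  have h2a : (2 : ℝ) - a ≠ 0 := by linarith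
  have key : ∀ w : Fin p → Fin p,
      (∑ z : Fin p → Fin p, crpProb θ p z *
          ∑ i : Fin p, ∑ j : Fin p, (if i < j then
            (a * (if z i = z j then 1 else 0) * (if w i ≠ w j then 1 else 0)
              + (2 - a) * (if z i ≠ z j then 1 else 0) * (if w i = w j then 1 else 0))
            else 0))
        = ∑ i : Fin p, ∑ j : Fin p, (if i < j then a * (2 - a) / 2 else 0) := by
    intro w
    simp_rw [Finset.mul_sum]
    rw [Finset.sum_comm]
    refine Finset.sum_congr rfl fun i _ => ?_
    rw [Finset.sum_comm]
    refine Finset.sum_congr rfl fun j _ => ?_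
    by_cases hij : i < j
    · simp only [if_pos hij]
      have hC := hpair i j (ne_of_lt hij)
      set u : ℝ := if w i ≠ w j then 1 else 0 with hu
      set v : ℝ := if w i = w j then 1 else 0 with hv
      have expand : ∀ z : Fin p → Fin p,
          crpProb θ p z * (a * (if z i = z j then 1 else 0) * u
              + (2 - a) * (if z i ≠ z j then 1 else 0) * v)
            = a * u * (if z i = z j then crpProb θ p z else 0)
              + (2 - a) * v * (crpProb θ p z - (if z i = z j then crpProb θ p z else 0)) := by
        intro z
        by_cases h : z i = z j <;> simp [h] <;> ring
      rw [Finset.sum_congr rfl fun z _ => expand z, Finset.sum_add_distrib,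
        ← Finset.mul_sum, ← Finset.mul_sum, Finset.sum_sub_distrib, hC, htot]
      have hθ1 : θ + 1 = 2 / (2 - a) := by
        rw [hθa]
        field_simp
        ring
      rw [hθ1]
      by_cases hw : w i = w j
      · simp only [hu, hv, if_pos hw, if_neg (not_not_intro hw)]
        field_simp
        ring
      · simp only [hu, hv, if_neg hw, if_pos hw]
        field_simp
        ring
    · simp [hij]
  rw [key zhat, key zhat']
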